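/- arXiv:1305.0255 — 3 statements merged into one kernel-verified Lean document; each statement's English description precedes it below -/
import Mathlib

section
/- For any ε > 0, any integer N ≥ 1, and any reals μ₁, μ₂ ≥ 0 satisfying N/β − μ₁ ≥ 0, there exists a constant C = C(β,ε,N,μ₁,μ₂) such that for all z ≥ 0: Σ_{k=N}^∞ k^{μ₂} I_{k/β − μ₁}(z) ≤ C · z^{N/β − μ₁} · e^{3z/2} · e^{εz}. -/
open Real

/-- Modified Bessel function of order `v`:
`I_v(z) = ∑_{j=0}^∞ (z/2)^{v+2j} / (j! Γ(v+j+1))`. -/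
noncomputable def besselI (v z : ℝ) : ℝ :=
  ∑' j : ℕ, (z / 2) ^ (v + 2 * (j : ℝ)) / ((j.factorial : ℝ) * Real.Gamma (v + (j : ℝ) + 1))

section Aux

open MeasureTheory Set


/-- Key inequality: `y^t ≤ Γ(t+1) e^{y+1}` for `y, t ≥ 0`. -/
lemma rpow_le_Gamma_mul_exp {y t : ℝ} (hy : 0 ≤ y) (ht : 0 ≤ t) :
    y ^ t ≤ Real.Gamma (t + 1) * Real.exp (y + 1) := by
  have ht1 : (0:ℝ) < t + 1 := by linarith
  have hint : IntegrableOn (fun x : ℝ => Real.exp (-x) * x ^ ((t+1) - 1)) (Ioi 0) :=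
    Real.GammaIntegral_convergent ht1
  have hsub : Ioc y (y+1) ⊆ Ioi (0:ℝ) := fun x hx => lt_of_le_of_lt hy hx.1
  have key : Real.exp (-(y+1)) * y ^ t ≤ Real.Gamma (t+1) := by
    rw [Real.Gamma_eq_integral ht1]
    have h1 : Real.exp (-(y+1)) * y ^ t * (volume (Ioc y (y+1))).toReal
        ≤ ∫ x in Ioc y (y+1), Real.exp (-x) * x ^ ((t+1)-1) := by
      apply setIntegral_ge_of_const_le_real measurableSet_Ioc
      · rw [Real.volume_Ioc]; exact ENNReal.ofReal_ne_top
      · intro x hx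
        have hxe : ((t:ℝ)+1) - 1 = t := by ring
        rw [hxe]
        have h2 : Real.exp (-(y+1)) ≤ Real.exp (-x) := Real.exp_le_exp.2 (by linarith [hx.2])
        have h3 : y ^ t ≤ x ^ t := Real.rpow_le_rpow hy hx.1.le ht
        exact mul_le_mul h2 h3 (Real.rpow_nonneg hy t) (Real.exp_pos _).le
      · exact hint.mono_set hsub
    have hvol : (volume (Ioc y (y+1))).toReal = 1 := by
      rw [Real.volume_Ioc]; norm_num
    rw [hvol, mul_one] at h1
    refine h1.trans ?_
    apply setIntegral_mono_set hint
    · refine (ae_restrict_iff' measurableSet_Ioi).2 (Filter.Eventually.of_forall fun x hx => ?_)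
      exact mul_nonneg (Real.exp_pos _).le (Real.rpow_nonneg (le_of_lt hx) _)
    · exact Filter.Eventually.of_forall hsub
  have h4 := mul_le_mul_of_nonneg_right key (Real.exp_pos (y+1)).le
  calc y ^ t = Real.exp (-(y+1)) * y ^ t * Real.exp (y+1) := by
        rw [mul_right_comm, ← Real.exp_add]
        rw [show -(y+1) + (y+1) = 0 by ring, Real.exp_zero, one_mul]
    _ ≤ Real.Gamma (t+1) * Real.exp (y+1) := h4

/-- Gamma is monotone on `[2, ∞)`. -/
lemma Gamma_mono_aux {a b : ℝ} (ha : 2 ≤ a) (hab : a ≤ b) : Real.Gamma a ≤ Real.Gamma b :=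
  Real.Gamma_strictMonoOn_Ici.monotoneOn ha (le_trans ha hab) hab

/-- `Γ(v+1) ≥ 1/2` for `v ≥ 0`. -/
lemma half_le_Gamma_add_one {v : ℝ} (hv : 0 ≤ v) : (1:ℝ)/2 ≤ Real.Gamma (v + 1) := by
  rcases le_or_gt 1 v with h | h
  · have := Gamma_mono_aux (le_refl 2) (by linarith : (2:ℝ) ≤ v + 1)
    rw [Real.Gamma_two] at this; linarith
  · have h2 : Real.Gamma (v + 1 + 1) = (v + 1) * Real.Gamma (v + 1) :=
      Real.Gamma_add_one (by linarith)
    have h3 : (1:ℝ) ≤ Real.Gamma (v + 1 + 1) := by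
      have := Gamma_mono_aux (le_refl 2) (by linarith : (2:ℝ) ≤ v + 1 + 1)
      rw [Real.Gamma_two] at this; linarith
    have h4 : (0:ℝ) < v + 1 := by linarith
    nlinarith [Real.Gamma_pos_of_pos (by linarith : (0:ℝ) < v + 1)]

/-- Summability of `(N+j)^μ₂ θ^j`. -/
lemma summable_weight_geom (N : ℕ) (hN : 1 ≤ N) {μ₂ θ : ℝ} (hμ₂ : 0 ≤ μ₂)
    (hθ0 : 0 < θ) (hθ1 : θ < 1) :
    Summable (fun j : ℕ => ((N:ℝ) + j) ^ μ₂ * θ ^ j) := by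
  set m : ℕ := ⌈μ₂⌉₊ with hm
  have h1 : Summable (fun n : ℕ => ((n:ℝ)) ^ m * θ ^ n) :=
    summable_pow_mul_geometric_of_norm_lt_one m (by rwa [Real.norm_eq_abs, abs_of_pos hθ0])
  have h2 : Summable (fun j : ℕ => (((j:ℝ)+1)) ^ m * θ ^ (j+1)) := by
    have := (summable_nat_add_iff 1).2 h1
    simpa using this
  have h3 : Summable (fun j : ℕ => (((N:ℝ)+1) ^ m * θ⁻¹) * ((((j:ℝ)+1)) ^ m * θ ^ (j+1))) :=
    h2.mul_left _
  apply Summable.of_nonneg_of_le (fun j => by positivity) _ h3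
  intro j
  have hb1 : (1:ℝ) ≤ (N:ℝ) + j := by
    have : (1:ℝ) ≤ (N:ℝ) := by exact_mod_cast hN
    have : (0:ℝ) ≤ (j:ℝ) := Nat.cast_nonneg j
    linarith
  have hr : ((N:ℝ) + j) ^ μ₂ ≤ ((N:ℝ) + j) ^ (m:ℝ) :=
    Real.rpow_le_rpow_of_exponent_le hb1 (Nat.le_ceil μ₂)
  have hrc : ((N:ℝ) + j) ^ (m:ℝ) = ((N:ℝ) + j) ^ m := Real.rpow_natCast _ m
  have hsplit : ((N:ℝ) + j) ^ m ≤ (((N:ℝ)+1) * ((j:ℝ)+1)) ^ m := by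
    apply pow_le_pow_left₀ (by linarith)
    nlinarith [Nat.cast_nonneg (α := ℝ) j, Nat.cast_nonneg (α := ℝ) N]
  calc ((N:ℝ) + j) ^ μ₂ * θ ^ j
      ≤ (((N:ℝ)+1) * ((j:ℝ)+1)) ^ m * θ ^ j := by
        refine mul_le_mul_of_nonneg_right ?_ (by positivity)
        exact hr.trans (by rw [hrc]; exact hsplit)
    _ = (((N:ℝ)+1) ^ m * θ⁻¹) * ((((j:ℝ)+1)) ^ m * θ ^ (j+1)) := by
        rw [mul_pow]; field_simp [pow_succ]; ring

lemma bessel_term_bound {β vN θ x : ℝ} (hβ0 : 0 < β) (hβ1 : β < 1)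
    (hvN : 0 ≤ vN) (hθ0 : 0 < θ) (hθ1 : θ < 1) (hx : 0 ≤ x) (j' j : ℕ) :
    x ^ ((vN + (j':ℝ)/β) + 2*(j:ℝ)) /
        ((j.factorial : ℝ) * Real.Gamma ((vN + (j':ℝ)/β) + (j:ℝ) + 1))
      ≤ 2 * x ^ vN * Real.exp (x/θ + x + 1) * θ ^ j' * θ ^ j := by
  have hjβ : (0:ℝ) ≤ (j':ℝ)/β := div_nonneg (Nat.cast_nonneg j') hβ0.le
  have hjn : (0:ℝ) ≤ (j:ℝ) := Nat.cast_nonneg j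
  have hE : 1 ≤ Real.exp (x/θ + x + 1) := Real.one_le_exp (by positivity)
  have hΓpos : 0 < Real.Gamma ((vN + (j':ℝ)/β) + (j:ℝ) + 1) :=
    Real.Gamma_pos_of_pos (by positivity)
  have hfacpos : (0:ℝ) < (j.factorial : ℝ) := by exact_mod_cast j.factorial_pos
  rcases eq_or_lt_of_le hx with hx0 | hxpos
  · -- x = 0
    by_cases hz : (vN + (j':ℝ)/β) + 2*(j:ℝ) = 0
    · have h1 : vN = 0 := by linarith
      have h3 : (j:ℝ) = 0 := by linarith
      have h2 : (j':ℝ)/β = 0 := by linarith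
      have hj'0 : j' = 0 := by
        by_contra hc
        have : (0:ℝ) < (j':ℝ)/β := div_pos (by exact_mod_cast Nat.pos_of_ne_zero hc) hβ0
        linarith
      have hj0 : j = 0 := by exact_mod_cast h3
      subst hj'0 hj0
      rw [← hx0, h1]
      simp only [Nat.cast_zero, zero_div, add_zero, mul_zero, zero_add, pow_zero, mul_one,
        Nat.factorial_zero, Nat.cast_one, one_mul, Real.rpow_zero, Real.Gamma_one]
      nlinarith [Real.one_le_exp (by norm_num : (0:ℝ) ≤ 1)]
    · have hzpos : 0 < (vN + (j':ℝ)/β) + 2*(j:ℝ) := by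
        rcases lt_or_eq_of_le (by positivity : (0:ℝ) ≤ (vN + (j':ℝ)/β) + 2*(j:ℝ)) with h | h
        · exact h
        · exact absurd h.symm hz
      rw [← hx0, Real.zero_rpow hzpos.ne', zero_div]
      have : (0:ℝ) ≤ (0:ℝ) ^ vN := Real.rpow_nonneg le_rfl vN
      positivity
  · -- x > 0
    by_cases h00 : j' = 0 ∧ j = 0
    · obtain ⟨h1, h2⟩ := h00
      rw [h1, h2]
      simp only [Nat.cast_zero, Nat.factorial_zero, Nat.cast_one, pow_zero, mul_one, one_mul,
        zero_div, mul_zero, add_zero]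
      have hΓ : (1:ℝ)/2 ≤ Real.Gamma (vN + 1) := half_le_Gamma_add_one hvN
      have hΓp : 0 < Real.Gamma (vN + 1) := Real.Gamma_pos_of_pos (by linarith)
      rw [div_le_iff₀ hΓp]
      have hxv : (0:ℝ) ≤ x ^ vN := Real.rpow_nonneg hx vN
      calc x ^ vN ≤ x ^ vN * (2 * Real.Gamma (vN + 1)) := by nlinarith
        _ ≤ x ^ vN * (2 * Real.Gamma (vN + 1)) * Real.exp (x/θ + x + 1) :=
            le_mul_of_one_le_right (by positivity) hE
        _ = 2 * x ^ vN * Real.exp (x/θ + x + 1) * Real.Gamma (vN + 1) := by ring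
    · have hjj : 1 ≤ j' + j := by
        rcases Nat.eq_zero_or_pos (j' + j) with h | h
        · exact absurd ⟨Nat.eq_zero_of_add_eq_zero_right h, Nat.eq_zero_of_add_eq_zero_left h⟩ h00
        · exact h
      set s : ℝ := (j':ℝ)/β + j with hs
      have hjle : (j':ℝ) ≤ (j':ℝ)/β := by
        rw [le_div_iff₀ hβ0]; nlinarith [Nat.cast_nonneg (α := ℝ) j']
      have hcast : (1:ℝ) ≤ (j':ℝ) + (j:ℝ) := by exact_mod_cast hjj
      have hs1 : 1 ≤ s := by simp only [hs]; linarith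
      have hΓmono : Real.Gamma (s+1) ≤ Real.Gamma (vN + s + 1) :=
        Gamma_mono_aux (by linarith) (by linarith)
      have hΓs : 0 < Real.Gamma (s+1) := Real.Gamma_pos_of_pos (by linarith)
      have hθs : θ ^ s ≤ θ ^ j' * θ ^ j := by
        have h1 : θ ^ s ≤ θ ^ ((j':ℝ) + (j:ℝ)) :=
          Real.rpow_le_rpow_of_exponent_ge hθ0 hθ1.le (by simp only [hs]; linarith)
        have h2 : θ ^ ((j':ℝ) + (j:ℝ)) = θ ^ j' * θ ^ j := by
          rw [Real.rpow_add hθ0, Real.rpow_natCast, Real.rpow_natCast]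
        linarith
      have hxs : x ^ s ≤ θ ^ j' * θ ^ j * Real.Gamma (s+1) * Real.exp (x/θ + 1) := by
        have hA := rpow_le_Gamma_mul_exp (by positivity : (0:ℝ) ≤ x/θ) (by linarith : (0:ℝ) ≤ s)
        rw [Real.div_rpow hx hθ0.le, div_le_iff₀ (Real.rpow_pos_of_pos hθ0 s)] at hA
        calc x ^ s ≤ Real.Gamma (s+1) * Real.exp (x/θ+1) * θ ^ s := hA
          _ ≤ Real.Gamma (s+1) * Real.exp (x/θ+1) * (θ ^ j' * θ ^ j) := by
              refine mul_le_mul_of_nonneg_left hθs (by positivity)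
          _ = θ ^ j' * θ ^ j * Real.Gamma (s+1) * Real.exp (x/θ + 1) := by ring
      have h6 : x ^ j ≤ (j.factorial : ℝ) * Real.exp x := by
        have := Real.pow_div_factorial_le_exp x hx j
        rw [div_le_iff₀ hfacpos] at this
        linarith
      have hexpand : x ^ ((vN + (j':ℝ)/β) + 2*(j:ℝ)) = x ^ vN * x ^ s * x ^ j := by
        rw [show (vN + (j':ℝ)/β) + 2*(j:ℝ) = vN + (s + (j:ℝ)) by simp only [hs]; ring,
          Real.rpow_add hxpos, Real.rpow_add hxpos, Real.rpow_natCast, mul_assoc]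
      have hΓarg : (vN + (j':ℝ)/β) + (j:ℝ) + 1 = vN + s + 1 := by simp only [hs]; ring
      rw [hΓarg, hexpand, div_le_iff₀ (by positivity)]
      have hxv : (0:ℝ) ≤ x ^ vN := Real.rpow_nonneg hx vN
      calc x ^ vN * x ^ s * x ^ j
          ≤ x ^ vN * (θ ^ j' * θ ^ j * Real.Gamma (s+1) * Real.exp (x/θ + 1)) *
              ((j.factorial : ℝ) * Real.exp x) := by
            have hxsn : (0:ℝ) ≤ x ^ s := Real.rpow_nonneg hx s
            have hxjn : (0:ℝ) ≤ x ^ j := by positivity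
            refine mul_le_mul (mul_le_mul_of_nonneg_left hxs hxv) h6 hxjn ?_
            positivity
        _ ≤ x ^ vN * (θ ^ j' * θ ^ j * Real.Gamma (vN + s + 1) * Real.exp (x/θ + 1)) *
              ((j.factorial : ℝ) * Real.exp x) := by
            refine mul_le_mul_of_nonneg_right (mul_le_mul_of_nonneg_left ?_ hxv) (by positivity)
            refine mul_le_mul_of_nonneg_right (mul_le_mul_of_nonneg_left hΓmono (by positivity))
              (by positivity)
        _ = x ^ vN * Real.exp (x/θ + x + 1) * θ ^ j' * θ ^ j *
              ((j.factorial : ℝ) * Real.Gamma (vN + s + 1)) := by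
            rw [show x/θ + x + 1 = (x/θ + 1) + x by ring, Real.exp_add (x/θ + 1) x]; ring
        _ ≤ 2 * x ^ vN * Real.exp (x/θ + x + 1) * θ ^ j' * θ ^ j *
              ((j.factorial : ℝ) * Real.Gamma (vN + s + 1)) := by
            have hP : (0:ℝ) ≤ x ^ vN * Real.exp (x/θ + x + 1) * θ ^ j' * θ ^ j *
              ((j.factorial : ℝ) * Real.Gamma (vN + s + 1)) := by positivity
            nlinarith

end Aux

/-- For any `ε > 0`, integer `N ≥ 1`, and `μ₁, μ₂ ≥ 0` with `N/β − μ₁ ≥ 0`, there is a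
constant `C = C(β,ε,N,μ₁,μ₂)` with
`Σ_{k=N}^∞ k^{μ₂} I_{k/β−μ₁}(z) ≤ C z^{N/β−μ₁} e^{3z/2} e^{εz}` for all `z ≥ 0`. -/
theorem bessel_weighted_sum_bound (β : ℝ) (hβ0 : 0 < β) (hβ1 : β < 1)
    (ε : ℝ) (hε : 0 < ε) (N : ℕ) (hN : 1 ≤ N) (μ₁ μ₂ : ℝ) (hμ₁ : 0 ≤ μ₁) (hμ₂ : 0 ≤ μ₂)
    (hNβ : 0 ≤ (N : ℝ) / β - μ₁) :
    ∃ C > 0, ∀ z : ℝ, 0 ≤ z →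
      (∑' j : ℕ, ((N : ℝ) + (j : ℝ)) ^ μ₂ * besselI (((N : ℝ) + (j : ℝ)) / β - μ₁) z) ≤
        C * z ^ ((N : ℝ) / β - μ₁) * Real.exp (3 * z / 2) * Real.exp (ε * z) := by
  set vN : ℝ := (N:ℝ)/β - μ₁ with hvNdef
  set θ : ℝ := (2 + 2*ε)⁻¹ with hθdef
  have hθ0 : 0 < θ := by rw [hθdef]; positivity
  have hθ1 : θ < 1 := by
    rw [hθdef]
    rw [inv_lt_one_iff₀]
    right; linarith
  have h1θ : 0 < 1 - θ := by linarith
  have hS2sum : Summable (fun j' : ℕ => ((N:ℝ) + j') ^ μ₂ * θ ^ j') :=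
    summable_weight_geom N hN hμ₂ hθ0 hθ1
  set S2 : ℝ := ∑' j' : ℕ, ((N:ℝ) + j') ^ μ₂ * θ ^ j' with hS2def
  clear_value vN θ S2
  have hS2nonneg : 0 ≤ S2 := hS2def ▸ tsum_nonneg fun j => by positivity
  refine ⟨2 * Real.exp 1 * (1-θ)⁻¹ * S2 + 1, by positivity, ?_⟩
  intro z hz
  set E : ℝ := Real.exp ((z/2)/θ + z/2 + 1) with hEdef
  clear_value E
  have hx : (0:ℝ) ≤ z/2 := by linarith
  have hv : ∀ j' : ℕ, ((N:ℝ) + (j':ℝ))/β - μ₁ = vN + (j':ℝ)/β := fun j' => by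
    rw [hvNdef, add_div]; ring
  have hvnn : ∀ j' : ℕ, (0:ℝ) ≤ vN + (j':ℝ)/β := fun j' => by
    have h1 : (0:ℝ) ≤ (j':ℝ)/β := div_nonneg (Nat.cast_nonneg j') hβ0.le
    linarith
  have hΓp : ∀ j' j : ℕ, 0 < Real.Gamma ((vN + (j':ℝ)/β) + (j:ℝ) + 1) := fun j' j =>
    Real.Gamma_pos_of_pos (by nlinarith [hvnn j', Nat.cast_nonneg (α := ℝ) j])
  have hterm_nonneg : ∀ j' j : ℕ,
      (0:ℝ) ≤ (z/2) ^ ((vN + (j':ℝ)/β) + 2*(j:ℝ)) /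
        ((j.factorial : ℝ) * Real.Gamma ((vN + (j':ℝ)/β) + (j:ℝ) + 1)) := fun j' j => by
    have hf : (0:ℝ) < (j.factorial : ℝ) := by exact_mod_cast j.factorial_pos
    exact div_nonneg (Real.rpow_nonneg hx _) (mul_nonneg hf.le (hΓp j' j).le)
  have hinner : ∀ j' : ℕ, besselI (((N:ℝ) + (j':ℝ))/β - μ₁) z
      ≤ 2 * (z/2) ^ vN * E * θ ^ j' * (1-θ)⁻¹ := by
    intro j'
    rw [hv j', besselI]
    have hkey : ∀ j : ℕ,
        (z/2) ^ ((vN + (j':ℝ)/β) + 2*(j:ℝ)) /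
          ((j.factorial : ℝ) * Real.Gamma ((vN + (j':ℝ)/β) + (j:ℝ) + 1))
        ≤ 2 * (z/2) ^ vN * E * θ ^ j' * θ ^ j := fun j => by
      rw [hEdef]
      exact bessel_term_bound hβ0 hβ1 hNβ hθ0 hθ1 hx j' j
    have hgsum : Summable (fun j : ℕ => 2 * (z/2) ^ vN * E * θ ^ j' * θ ^ j) :=
      (summable_geometric_of_lt_one hθ0.le hθ1).mul_left _
    calc (∑' j : ℕ, (z/2) ^ ((vN + (j':ℝ)/β) + 2*(j:ℝ)) /
          ((j.factorial : ℝ) * Real.Gamma ((vN + (j':ℝ)/β) + (j:ℝ) + 1)))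
        ≤ ∑' j : ℕ, 2 * (z/2) ^ vN * E * θ ^ j' * θ ^ j :=
          Summable.tsum_le_tsum hkey (Summable.of_nonneg_of_le (hterm_nonneg j') hkey hgsum) hgsum
      _ = 2 * (z/2) ^ vN * E * θ ^ j' * (1-θ)⁻¹ := by
          rw [tsum_mul_left, tsum_geometric_of_lt_one hθ0.le hθ1]
  have hInonneg : ∀ j' : ℕ, 0 ≤ besselI (((N:ℝ) + (j':ℝ))/β - μ₁) z := fun j' => by
    rw [hv j', besselI]
    exact tsum_nonneg (hterm_nonneg j')
  have hfle : ∀ j' : ℕ, ((N:ℝ) + (j':ℝ)) ^ μ₂ * besselI (((N:ℝ) + (j':ℝ))/β - μ₁) z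
      ≤ (2 * (z/2) ^ vN * E * (1-θ)⁻¹) * (((N:ℝ) + j') ^ μ₂ * θ ^ j') := fun j' => by
    have h1 := mul_le_mul_of_nonneg_left (hinner j') (Real.rpow_nonneg (show (0:ℝ) ≤ (N:ℝ)+(j':ℝ) by positivity) μ₂)
    calc ((N:ℝ) + (j':ℝ)) ^ μ₂ * besselI (((N:ℝ) + (j':ℝ))/β - μ₁) z
        ≤ ((N:ℝ) + (j':ℝ)) ^ μ₂ * (2 * (z/2) ^ vN * E * θ ^ j' * (1-θ)⁻¹) := h1
      _ = (2 * (z/2) ^ vN * E * (1-θ)⁻¹) * (((N:ℝ) + j') ^ μ₂ * θ ^ j') := by ring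
  have hfnonneg : ∀ j' : ℕ, 0 ≤ ((N:ℝ) + (j':ℝ)) ^ μ₂ * besselI (((N:ℝ) + (j':ℝ))/β - μ₁) z :=
    fun j' => mul_nonneg (Real.rpow_nonneg (by positivity) μ₂) (hInonneg j')
  have hmaj : Summable (fun j' : ℕ =>
      (2 * (z/2) ^ vN * E * (1-θ)⁻¹) * (((N:ℝ) + j') ^ μ₂ * θ ^ j')) := hS2sum.mul_left _
  have houter : (∑' j' : ℕ, ((N:ℝ) + (j':ℝ)) ^ μ₂ * besselI (((N:ℝ) + (j':ℝ))/β - μ₁) z)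
      ≤ 2 * (z/2) ^ vN * E * (1-θ)⁻¹ * S2 := by
    calc (∑' j' : ℕ, ((N:ℝ) + (j':ℝ)) ^ μ₂ * besselI (((N:ℝ) + (j':ℝ))/β - μ₁) z)
        ≤ ∑' j' : ℕ, (2 * (z/2) ^ vN * E * (1-θ)⁻¹) * (((N:ℝ) + j') ^ μ₂ * θ ^ j') :=
          Summable.tsum_le_tsum hfle (Summable.of_nonneg_of_le hfnonneg hfle hmaj) hmaj
      _ = 2 * (z/2) ^ vN * E * (1-θ)⁻¹ * S2 := by rw [tsum_mul_left, ← hS2def]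
  refine houter.trans ?_
  have hEeq : E = Real.exp 1 * (Real.exp (3*z/2) * Real.exp (ε*z)) := by
    rw [hEdef, ← Real.exp_add, ← Real.exp_add]
    congr 1
    rw [hθdef]
    field_simp
    ring
  have hzz : (z/2) ^ vN ≤ z ^ vN := Real.rpow_le_rpow hx (by linarith) hNβ
  calc 2 * (z/2) ^ vN * E * (1-θ)⁻¹ * S2
      = (2 * Real.exp 1 * (1-θ)⁻¹ * S2) * (z/2) ^ vN * Real.exp (3*z/2) * Real.exp (ε*z) := by
        rw [hEeq]; ring
    _ ≤ (2 * Real.exp 1 * (1-θ)⁻¹ * S2 + 1) * z ^ vN * Real.exp (3*z/2) * Real.exp (ε*z) := by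
        gcongr
        · linarith
end

section
/- Let μ₂ > 0, v > 1, μ₁ ≥ 0, let N be an integer with N ≥ βμ₁, and let h be a real number (possibly negative) with h ≥ μ₁ − N/β. Then there exists a constant C = C(β,v,μ₁,μ₂,h,N) such that for all r, r' > 0 and R > 0 with rr' < 9R²/10: Σ_{k=N}^∞ k^{μ₂} |G_{k/β − μ₁, v, h}(r,r',R)| ≤ C · R^{2−2v}. -/
open Real MeasureTheory

/-- `G_{μ,v,h}(r,r',R) = π ∫_0^∞ (2πt)^{−v} (rr'/(2t))^h e^{−(r²+r'²+R²)/(4t)} I_μ(rr'/(2t)) dt`. -/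
noncomputable def Gfun (μ v h r r' R : ℝ) : ℝ :=
  π * ∫ t in Set.Ioi (0 : ℝ),
    (2 * π * t) ^ (-v) * (r * r' / (2 * t)) ^ h *
      Real.exp (-(r ^ 2 + r' ^ 2 + R ^ 2) / (4 * t)) * besselI μ (r * r' / (2 * t))

set_option maxHeartbeats 1000000

open Set

lemma fact_mul_Gamma_le (μ : ℝ) (hμ : 0 ≤ μ) (j : ℕ) :
    (j.factorial : ℝ) * Real.Gamma (μ + 1) ≤ Real.Gamma (μ + j + 1) := by
  induction j with
  | zero => simp
  | succ j ih =>
    have h1 : (0:ℝ) < μ + j + 1 := by positivity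
    have h2 : Real.Gamma (μ + (j+1:ℕ) + 1) = (μ + j + 1) * Real.Gamma (μ + j + 1) := by
      rw [show μ + ((j:ℕ)+1:ℕ) + 1 = (μ + (j:ℝ) + 1) + 1 by push_cast; ring,
        Real.Gamma_add_one h1.ne']
    rw [h2]
    calc ((j+1).factorial : ℝ) * Real.Gamma (μ + 1)
        = ((j:ℝ)+1) * ((j.factorial : ℝ) * Real.Gamma (μ + 1)) := by
          push_cast [Nat.factorial_succ]; ring
      _ ≤ (μ + j + 1) * Real.Gamma (μ + j + 1) := by
          apply mul_le_mul (by linarith) ih (by positivity) (by linarith)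

lemma two_j_factorial_le (j : ℕ) : ((2*j).factorial : ℝ) ≤ 4^j * (j.factorial:ℝ)^2 := by
  induction j with
  | zero => norm_num
  | succ j ih =>
    have h : (2*(j+1)).factorial = (2*j+2) * ((2*j+1) * (2*j).factorial) := by
      rw [show 2*(j+1) = (2*j+1)+1 by ring, Nat.factorial_succ, Nat.factorial_succ]
    rw [h]
    push_cast [Nat.factorial_succ]
    have key := mul_le_mul_of_nonneg_left ih
      (show (0:ℝ) ≤ (2*(j:ℝ)+2) * (2*(j:ℝ)+1) by positivity)
    have hjf : (0:ℝ) ≤ (j.factorial:ℝ)^2 := by positivity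
    have h4 : (0:ℝ) < 4^j := by positivity
    have h6 : (2*(j:ℝ)+2) * (2*(j:ℝ)+1) ≤ 4*((j:ℝ)+1)^2 := by nlinarith
    have h7 := mul_le_mul_of_nonneg_right h6 (mul_nonneg h4.le hjf)
    linarith [key, h7, (by ring : (4:ℝ)^(j+1) * (((j:ℝ)+1)*(j.factorial:ℝ))^2 = 4*((j:ℝ)+1)^2*(4^j*(j.factorial:ℝ)^2))]
-- retry

lemma real_exp_eq_tsum (z : ℝ) : Real.exp z = ∑' n : ℕ, z^n / n.factorial := by
  rw [Real.exp_eq_exp_ℝ, NormedSpace.exp_eq_tsum (𝕂 := ℝ)]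
  simp [smul_eq_mul, div_eq_inv_mul]

lemma besselI_nonneg (μ z : ℝ) (hμ : 0 ≤ μ) (hz : 0 ≤ z) : 0 ≤ besselI μ z := by
  apply tsum_nonneg
  intro j
  have h1 : (0:ℝ) < μ + j + 1 := by positivity
  exact div_nonneg (Real.rpow_nonneg (by linarith) _)
    (by positivity)

lemma besselI_le (μ z : ℝ) (hμ : 0 ≤ μ) (hz : 0 < z) :
    besselI μ z ≤ (z/2)^μ * Real.exp z / Real.Gamma (μ+1) := by
  have hz2 : (0:ℝ) < z/2 := by linarith
  have hG : (0:ℝ) < Real.Gamma (μ+1) := Real.Gamma_pos_of_pos (by linarith)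
  set c : ℝ := (z/2)^μ / Real.Gamma (μ+1) with hc
  have hc0 : 0 ≤ c := div_nonneg (Real.rpow_nonneg hz2.le _) hG.le
  set b : ℕ → ℝ := fun j => c * (z^(2*j) / ((2*j).factorial : ℝ)) with hb
  -- termwise bound
  have hterm : ∀ j : ℕ, (z / 2) ^ (μ + 2 * (j : ℝ)) / ((j.factorial : ℝ) * Real.Gamma (μ + (j : ℝ) + 1)) ≤ b j := by
    intro j
    have e1 : (z/2) ^ (μ + 2*(j:ℝ)) = (z/2)^μ * (z^(2*j) / 4^j) := by
      rw [Real.rpow_add hz2, show (2*(j:ℝ)) = ((2*j : ℕ) : ℝ) by push_cast; ring,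
        Real.rpow_natCast, div_pow, show ((2:ℝ))^(2*j) = 4^j by rw [pow_mul]; norm_num]
    have hden : ((2*j).factorial:ℝ) * Real.Gamma (μ+1) ≤ 4^j * ((j.factorial:ℝ) * Real.Gamma (μ + j + 1)) := by
      calc ((2*j).factorial:ℝ) * Real.Gamma (μ+1)
          ≤ (4^j * (j.factorial:ℝ)^2) * Real.Gamma (μ+1) :=
            mul_le_mul_of_nonneg_right (two_j_factorial_le j) hG.le
        _ = 4^j * ((j.factorial:ℝ) * ((j.factorial:ℝ) * Real.Gamma (μ+1))) := by ring
        _ ≤ 4^j * ((j.factorial:ℝ) * Real.Gamma (μ + j + 1)) := by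
            apply mul_le_mul_of_nonneg_left _ (by positivity)
            exact mul_le_mul_of_nonneg_left (fact_mul_Gamma_le μ hμ j) (Nat.cast_nonneg _)
    have hd2 : (0:ℝ) < ((2*j).factorial:ℝ) * Real.Gamma (μ+1) := by positivity
    have e2 : (z/2)^μ * (z^(2*j) / 4^j) / ((j.factorial : ℝ) * Real.Gamma (μ + (j:ℝ) + 1))
        = (z/2)^μ * z^(2*j) / (4^j * ((j.factorial : ℝ) * Real.Gamma (μ + (j:ℝ) + 1))) := by
      ring
    rw [e1, e2, hb]
    have hnum : (0:ℝ) ≤ (z/2)^μ * z^(2*j) := by positivity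
    calc (z/2)^μ * z^(2*j) / (4^j * ((j.factorial : ℝ) * Real.Gamma (μ + (j:ℝ) + 1)))
        ≤ (z/2)^μ * z^(2*j) / (((2*j).factorial:ℝ) * Real.Gamma (μ+1)) :=
          div_le_div_of_nonneg_left hnum hd2 hden
      _ = c * (z^(2*j) / ((2*j).factorial : ℝ)) := by rw [hc]; ring
  -- summability of b
  have hble : ∀ j : ℕ, b j ≤ c * ((z^2)^j / (j.factorial : ℝ)) := by
    intro j
    apply mul_le_mul_of_nonneg_left _ hc0
    rw [← pow_mul]
    apply div_le_div_of_nonneg_left (by positivity) (by positivity)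
    exact_mod_cast Nat.factorial_le (by omega : j ≤ 2*j)
  have hbnn : ∀ j : ℕ, 0 ≤ b j := fun j => mul_nonneg hc0 (by positivity)
  have hbsum : Summable b :=
    Summable.of_nonneg_of_le hbnn hble ((Real.summable_pow_div_factorial (z^2)).mul_left c)
  have htnn : ∀ j : ℕ, 0 ≤ (z / 2) ^ (μ + 2 * (j : ℝ)) / ((j.factorial : ℝ) * Real.Gamma (μ + (j : ℝ) + 1)) := by
    intro j
    have h1 : (0:ℝ) < μ + j + 1 := by positivity
    exact div_nonneg (Real.rpow_nonneg hz2.le _) (by positivity)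
  have htsum : Summable (fun j : ℕ => (z / 2) ^ (μ + 2 * (j : ℝ)) / ((j.factorial : ℝ) * Real.Gamma (μ + (j : ℝ) + 1))) :=
    Summable.of_nonneg_of_le htnn hterm hbsum
  calc besselI μ z ≤ ∑' j, b j := Summable.tsum_le_tsum hterm htsum hbsum
    _ = c * ∑' j, (z^(2*j) / ((2*j).factorial : ℝ)) := tsum_mul_left
    _ ≤ c * Real.exp z := by
        apply mul_le_mul_of_nonneg_left _ hc0
        rw [real_exp_eq_tsum]
        have hgsum : Summable (fun n : ℕ => z^n / (n.factorial : ℝ)) :=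
          Real.summable_pow_div_factorial z
        have hfsum : Summable (fun j : ℕ => z^(2*j) / ((2*j).factorial : ℝ)) := by
          apply Summable.of_nonneg_of_le (fun j => by positivity)
            (fun j => ?_) (Real.summable_pow_div_factorial (z^2))
          rw [← pow_mul]
          apply div_le_div_of_nonneg_left (by positivity) (by positivity)
          exact_mod_cast Nat.factorial_le (by omega : j ≤ 2*j)
        exact Summable.tsum_le_tsum_of_inj (fun j : ℕ => 2*j) (fun a b hab => by simp only [] at hab; omega)
          (fun n _ => by positivity) (fun j => le_rfl) hfsum hgsum
    _ = (z/2)^μ * Real.exp z / Real.Gamma (μ+1) := by rw [hc]; ring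

lemma integral_inv_gamma {s c : ℝ} (hs : 0 < s) (hc : 0 < c) :
    IntegrableOn (fun t : ℝ => t ^ (-s-1) * Real.exp (-(c/t))) (Ioi 0) ∧
    ∫ t in Ioi 0, t ^ (-s-1) * Real.exp (-(c/t)) = (1/c) ^ s * Real.Gamma s := by
  set g : ℝ → ℝ := fun y => y^(s-1) * Real.exp (-(c*y)) with hg
  have hg_int : IntegrableOn g (Ioi 0) := by
    have h0 := Real.GammaIntegral_convergent hs
    have h1' := integrableOn_Ioi_comp_mul_left_iff
        (fun x : ℝ => Real.exp (-x) * x ^ (s-1)) 0 hc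
    rw [mul_zero] at h1'
    have h1 : IntegrableOn (fun x : ℝ => Real.exp (-(c*x)) * (c*x) ^ (s-1)) (Ioi 0) :=
      h1'.mpr h0
    have h2 : IntegrableOn
        (fun x : ℝ => (c : ℝ) ^ (1-s) * (Real.exp (-(c*x)) * (c*x) ^ (s-1))) (Ioi 0) :=
      h1.const_mul _
    apply h2.congr_fun _ measurableSet_Ioi
    intro x hx
    have hx0 : (0:ℝ) < x := hx
    rw [hg]
    simp only []
    rw [Real.mul_rpow hc.le hx0.le, ← mul_assoc, mul_comm ((c:ℝ)^(1-s)) (Real.exp (-(c*x))),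
      mul_assoc, ← mul_assoc ((c:ℝ)^(1-s)), ← Real.rpow_add hc]
    rw [show (1-s) + (s-1) = 0 by ring, Real.rpow_zero, one_mul, mul_comm]
  have hsub1 : IntegrableOn (fun x : ℝ => (|(-1:ℝ)| * x ^ ((-1:ℝ) - 1)) • g (x ^ (-1:ℝ))) (Ioi 0) :=
    (integrableOn_Ioi_comp_rpow_iff g (p := -1) (by norm_num)).mpr hg_int
  have hsub2 : ∫ x in Ioi 0, (|(-1:ℝ)| * x ^ ((-1:ℝ) - 1)) • g (x ^ (-1:ℝ)) = ∫ y in Ioi 0, g y :=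
    integral_comp_rpow_Ioi g (by norm_num)
  have heq : ∀ x ∈ Ioi (0:ℝ), (|(-1:ℝ)| * x ^ ((-1:ℝ) - 1)) • g (x ^ (-1:ℝ))
      = x ^ (-s-1) * Real.exp (-(c/x)) := by
    intro x hx
    have hx0 : (0:ℝ) < x := hx
    have e1 : x ^ ((-1:ℝ) - 1) * x ^ (-(s-1)) = x ^ (-s-1) := by
      rw [← Real.rpow_add hx0, show (-1:ℝ)-1+-(s-1) = -s-1 by ring]
    rw [hg]
    simp only [smul_eq_mul, abs_neg, abs_one, one_mul]
    rw [Real.rpow_neg_one, Real.inv_rpow hx0.le, ← Real.rpow_neg hx0.le,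
      ← div_eq_mul_inv c x, ← mul_assoc, e1]
  constructor
  · exact hsub1.congr_fun (fun x hx => heq x hx) measurableSet_Ioi
  · rw [← setIntegral_congr_fun measurableSet_Ioi heq, hsub2, hg]
    exact Real.integral_rpow_mul_exp_neg_mul_Ioi hs hc

lemma Gamma_add_nat_le (y : ℝ) (hy : 1 ≤ y) (n : ℕ) :
    Real.Gamma (y + n) ≤ Real.Gamma y * (y + n)^n := by
  induction n with
  | zero => simp
  | succ n ih =>
    have hyn : (0:ℝ) < y + n := by positivity
    have h1 : Real.Gamma (y + (n+1:ℕ)) = (y + n) * Real.Gamma (y + n) := by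
      rw [show y + ((n+1:ℕ):ℝ) = (y + n) + 1 by push_cast; ring, Real.Gamma_add_one hyn.ne']
    rw [h1]
    have hGy : 0 < Real.Gamma y := Real.Gamma_pos_of_pos (by linarith)
    calc (y + n) * Real.Gamma (y + n) ≤ (y + n) * (Real.Gamma y * (y + n)^n) :=
          mul_le_mul_of_nonneg_left ih hyn.le
      _ = Real.Gamma y * (y + n)^(n+1) := by ring
      _ ≤ Real.Gamma y * (y + (n+1:ℕ))^(n+1) := by
          apply mul_le_mul_of_nonneg_left _ hGy.le
          apply pow_le_pow_left₀ hyn.le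
          push_cast; linarith
      _ = Real.Gamma y * (y + ((n+1:ℕ):ℝ))^(n+1) := by norm_cast

lemma Gamma_ratio_bound (s₀ m₀ : ℝ) (hs : 0 < s₀) (hm : 0 ≤ m₀) (n : ℕ)
    (hn : s₀ + 2 ≤ m₀ + 1 + n) (x : ℝ) (hx : 0 ≤ x) :
    s₀ * Real.Gamma (s₀ + x) ≤ Real.Gamma (m₀ + x + 1) * (m₀ + 1 + x + n)^n := by
  have hG : 0 < Real.Gamma (s₀+x) := Real.Gamma_pos_of_pos (by linarith)
  have e2 : Real.Gamma (s₀ + x + 2) = (s₀+x+1) * ((s₀+x) * Real.Gamma (s₀+x)) := by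
    rw [show s₀ + x + 2 = (s₀ + x + 1) + 1 by ring,
      Real.Gamma_add_one (by positivity), Real.Gamma_add_one (by positivity)]
  calc s₀ * Real.Gamma (s₀ + x)
      ≤ ((s₀+x+1) * (s₀+x)) * Real.Gamma (s₀+x) := by
        apply mul_le_mul_of_nonneg_right _ hG.le
        nlinarith
    _ = Real.Gamma (s₀ + x + 2) := by rw [e2]; ring
    _ ≤ Real.Gamma (m₀ + 1 + x + n) := by
        apply Real.Gamma_strictMonoOn_Ici.monotoneOn
        · exact mem_Ici.mpr (by linarith)
        · exact mem_Ici.mpr (by linarith)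
        · linarith
    _ ≤ Real.Gamma (m₀ + x + 1) * (m₀ + 1 + x + n)^n := by
        have := Gamma_add_nat_le (m₀ + 1 + x) (by linarith) n
        rw [show m₀ + x + 1 = m₀ + 1 + x by ring]
        exact this

lemma Gfun_bound (v h μ r r' R : ℝ) (hv : 1 < v) (hμ : 0 ≤ μ) (hp : 0 ≤ h + μ)
    (hr : 0 < r) (hr' : 0 < r') (hR : 0 < R) (hrr : r * r' < 9 * R^2 / 10) :
    |Gfun μ v h r r' R| ≤ (π * (2*π)^(-v) * 4^(v-1) * (9/5:ℝ)^h) *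
      ((9/10:ℝ)^μ * (Real.Gamma (v+h+μ-1) / Real.Gamma (μ+1))) * R^(2-2*v) := by
  have h2π : (0:ℝ) < 2*π := by positivity
  set a : ℝ := r*r'/2 with ha
  have ha0 : 0 < a := by rw [ha]; positivity
  have hs0 : 0 < v+(h+μ)-1 := by linarith
  have hc0 : (0:ℝ) < R^2/4 := by positivity
  have hG : 0 < Real.Gamma (μ+1) := Real.Gamma_pos_of_pos (by linarith)
  set K : ℝ := (2*π)^(-v) * a^(h+μ) * (2:ℝ)^(-μ) / Real.Gamma (μ+1) with hK
  have h2πv : (0:ℝ) ≤ (2*π)^(-v) := Real.rpow_nonneg h2π.le _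
  have hK0 : 0 ≤ K := by rw [hK]; positivity
  have hpt : ∀ t ∈ Ioi (0:ℝ),
      ‖(2 * π * t) ^ (-v) * (r * r' / (2 * t)) ^ h *
        Real.exp (-(r ^ 2 + r' ^ 2 + R ^ 2) / (4 * t)) * besselI μ (r * r' / (2 * t))‖
      ≤ K * (t ^ (-(v+(h+μ)-1)-1) * Real.exp (-((R^2/4)/t))) := by
    intro t ht
    have ht0 : (0:ℝ) < t := ht
    have e_z : r*r'/(2*t) = a/t := by rw [ha]; ring
    have hz0 : (0:ℝ) < a / t := by positivity
    have h1 : (0:ℝ) ≤ (2*π*t)^(-v) := Real.rpow_nonneg (by positivity) _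
    have h2 : (0:ℝ) ≤ (a/t) ^ h := Real.rpow_nonneg hz0.le _
    have h3 := besselI_nonneg μ (a/t) hμ hz0.le
    rw [e_z, Real.norm_eq_abs, abs_of_nonneg (by positivity)]
    have hIb := besselI_le μ (a/t) hμ hz0
    have step1 : (2 * π * t) ^ (-v) * (a/t) ^ h *
        Real.exp (-(r ^ 2 + r' ^ 2 + R ^ 2) / (4 * t)) * besselI μ (a/t)
        ≤ (2 * π * t) ^ (-v) * (a/t) ^ h *
        Real.exp (-(r ^ 2 + r' ^ 2 + R ^ 2) / (4 * t)) *
        ((a/t/2)^μ * Real.exp (a/t) / Real.Gamma (μ+1)) := by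
      apply mul_le_mul_of_nonneg_left hIb (by positivity)
    refine le_trans step1 ?_
    have hexp : Real.exp (-(r ^ 2 + r' ^ 2 + R ^ 2) / (4 * t)) * Real.exp (a/t)
        ≤ Real.exp (-((R^2/4)/t)) := by
      rw [← Real.exp_add, Real.exp_le_exp,
        show -(r ^ 2 + r' ^ 2 + R ^ 2) / (4 * t) + a/t = (a - (r^2+r'^2+R^2)/4)/t by ring,
        show -((R^2/4)/t) = (-(R^2/4))/t by ring]
      apply div_le_div_of_nonneg_right ?_ ht0.le
      rw [ha]; nlinarith [sq_nonneg (r - r')]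
    have e_pow : (2*π*t)^(-v) = (2*π)^(-v) * t^(-v) := Real.mul_rpow h2π.le ht0.le
    have e_zh : (a/t)^h = a^h * t^(-h) := by
      rw [Real.div_rpow ha0.le ht0.le, Real.rpow_neg ht0.le, div_eq_mul_inv]
    have e_zm : (a/t/2)^μ = a^μ * (2:ℝ)^(-μ) * t^(-μ) := by
      rw [show a/t/2 = (a/2)/t by ring, Real.div_rpow (by positivity) ht0.le,
        Real.div_rpow ha0.le (by norm_num), Real.rpow_neg ht0.le,
        Real.rpow_neg (by norm_num : (0:ℝ) ≤ 2)]
      ring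
    have big : (2*π*t)^(-v) * (a/t)^h * ((a/t/2)^μ / Real.Gamma (μ+1))
        = K * t^(-(v+(h+μ)-1)-1) := by
      rw [e_pow, e_zh, e_zm, hK]
      rw [show (2 * π) ^ (-v) * t ^ (-v) * (a ^ h * t ^ (-h)) *
          (a ^ μ * (2:ℝ) ^ (-μ) * t ^ (-μ) / Real.Gamma (μ + 1))
          = ((2 * π) ^ (-v) * (a ^ h * a ^ μ) * (2:ℝ)^(-μ) / Real.Gamma (μ+1)) *
            (t ^ (-v) * t ^ (-h) * t ^ (-μ)) by ring,
        ← Real.rpow_add ha0, ← Real.rpow_add ht0, ← Real.rpow_add ht0,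
        show -v + -h + -μ = -(v+(h+μ)-1)-1 by ring]
    calc (2 * π * t) ^ (-v) * (a/t) ^ h *
        Real.exp (-(r ^ 2 + r' ^ 2 + R ^ 2) / (4 * t)) *
        ((a/t/2)^μ * Real.exp (a/t) / Real.Gamma (μ+1))
        = ((2*π*t)^(-v) * (a/t)^h * ((a/t/2)^μ / Real.Gamma (μ+1))) *
          (Real.exp (-(r ^ 2 + r' ^ 2 + R ^ 2) / (4 * t)) * Real.exp (a/t)) := by ring
      _ ≤ ((2*π*t)^(-v) * (a/t)^h * ((a/t/2)^μ / Real.Gamma (μ+1))) *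
          Real.exp (-((R^2/4)/t)) := by
          apply mul_le_mul_of_nonneg_left hexp
          have h4 : (0:ℝ) ≤ (a/t/2)^μ := Real.rpow_nonneg (by positivity) _
          positivity
      _ = K * (t ^ (-(v+(h+μ)-1)-1) * Real.exp (-((R^2/4)/t))) := by rw [big]; ring
  -- integral step
  obtain ⟨hint, hval⟩ := integral_inv_gamma hs0 hc0
  have habs : |Gfun μ v h r r' R| ≤ π * (K * ((1/(R^2/4)) ^ (v+(h+μ)-1) * Real.Gamma (v+(h+μ)-1))) := by
    rw [Gfun, abs_mul, abs_of_pos Real.pi_pos]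
    apply mul_le_mul_of_nonneg_left _ Real.pi_pos.le
    calc |∫ t in Ioi (0:ℝ), (2 * π * t) ^ (-v) * (r * r' / (2 * t)) ^ h *
          Real.exp (-(r ^ 2 + r' ^ 2 + R ^ 2) / (4 * t)) * besselI μ (r * r' / (2 * t))|
        = ‖∫ t in Ioi (0:ℝ), (2 * π * t) ^ (-v) * (r * r' / (2 * t)) ^ h *
          Real.exp (-(r ^ 2 + r' ^ 2 + R ^ 2) / (4 * t)) * besselI μ (r * r' / (2 * t))‖ :=
          (Real.norm_eq_abs _).symm
      _ ≤ ∫ t in Ioi (0:ℝ), ‖(2 * π * t) ^ (-v) * (r * r' / (2 * t)) ^ h *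
          Real.exp (-(r ^ 2 + r' ^ 2 + R ^ 2) / (4 * t)) * besselI μ (r * r' / (2 * t))‖ :=
          norm_integral_le_integral_norm _
      _ ≤ ∫ t in Ioi (0:ℝ), K * (t ^ (-(v+(h+μ)-1)-1) * Real.exp (-((R^2/4)/t))) := by
          apply integral_mono_of_nonneg
          · exact Filter.Eventually.of_forall (fun t => norm_nonneg _)
          · exact (hint.const_mul K)
          · exact (ae_restrict_iff' measurableSet_Ioi).mpr (Filter.Eventually.of_forall hpt)
      _ = K * ((1/(R^2/4)) ^ (v+(h+μ)-1) * Real.Gamma (v+(h+μ)-1)) := by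
          rw [integral_const_mul, hval]
  refine habs.trans ?_
  -- final arithmetic
  have hΓarg : v+h+μ-1 = v+(h+μ)-1 := by ring
  rw [hΓarg]
  set Γs : ℝ := Real.Gamma (v+(h+μ)-1) with hΓs
  have hΓs0 : 0 < Γs := Real.Gamma_pos_of_pos hs0
  set Q : ℝ := 4/R^2 with hQ
  have hQ0 : (0:ℝ) < Q := by rw [hQ]; positivity
  have eq1 : (1/(R^2/4) : ℝ) = Q := by rw [one_div, inv_div, hQ]
  rw [eq1]
  have q1 : Q^(v+(h+μ)-1) = Q^(v-1) * Q^(h+μ) := by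
    rw [show v+(h+μ)-1 = (v-1)+(h+μ) by ring, Real.rpow_add hQ0]
  have q2 : a^(h+μ) * Q^(h+μ) = (a*Q)^(h+μ) := (Real.mul_rpow ha0.le hQ0.le).symm
  have q3 : a*Q ≤ 9/5 := by
    have e : a*Q = (2*(r*r')) / R^2 := by rw [ha, hQ]; field_simp; ring
    rw [e, div_le_iff₀ (by positivity : (0:ℝ) < R^2)]
    nlinarith
  have q4 : (a*Q)^(h+μ) ≤ (9/5:ℝ)^(h+μ) :=
    Real.rpow_le_rpow (by positivity) q3 hp
  have q5 : (9/5:ℝ)^(h+μ) = (9/5:ℝ)^h * (9/5:ℝ)^μ := Real.rpow_add (by norm_num) _ _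
  have q6 : (2:ℝ)^(-μ) * (9/5:ℝ)^μ = (9/10:ℝ)^μ := by
    rw [Real.rpow_neg (by norm_num : (0:ℝ) ≤ 2),
      show (9/10:ℝ) = (9/5)/2 by norm_num,
      Real.div_rpow (by norm_num) (by norm_num : (0:ℝ) ≤ 2), div_eq_mul_inv]
    ring
  have q7 : Q^(v-1) = 4^(v-1) * R^(2-2*v) := by
    have e : ((R:ℝ)^2)^(v-1) = R^(2*(v-1)) := by
      rw [← Real.rpow_natCast R 2, ← Real.rpow_mul hR.le]
      norm_num
    rw [hQ, Real.div_rpow (by norm_num) (by positivity), e, div_eq_mul_inv,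
      ← Real.rpow_neg hR.le, show -(2*(v-1)) = 2-2*v by ring]
  have star : a^(h+μ) * (2:ℝ)^(-μ) * Q^(v+(h+μ)-1)
      ≤ 4^(v-1) * (9/5:ℝ)^h * (9/10:ℝ)^μ * R^(2-2*v) := by
    calc a^(h+μ) * (2:ℝ)^(-μ) * Q^(v+(h+μ)-1)
        = (Q^(v-1) * (2:ℝ)^(-μ)) * (a^(h+μ) * Q^(h+μ)) := by rw [q1]; ring
      _ = (Q^(v-1) * (2:ℝ)^(-μ)) * (a*Q)^(h+μ) := by rw [q2]
      _ ≤ (Q^(v-1) * (2:ℝ)^(-μ)) * (9/5:ℝ)^(h+μ) := by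
          apply mul_le_mul_of_nonneg_left q4
          have hh1 : (0:ℝ) ≤ Q^(v-1) := Real.rpow_nonneg hQ0.le _
          have hh2 : (0:ℝ) ≤ (2:ℝ)^(-μ) := Real.rpow_nonneg (by norm_num) _
          positivity
      _ = Q^(v-1) * (9/5:ℝ)^h * ((2:ℝ)^(-μ) * (9/5:ℝ)^μ) := by rw [q5]; ring
      _ = Q^(v-1) * (9/5:ℝ)^h * (9/10:ℝ)^μ := by rw [q6]
      _ = 4^(v-1) * (9/5:ℝ)^h * (9/10:ℝ)^μ * R^(2-2*v) := by rw [q7]; ring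
  calc π * (K * (Q ^ (v+(h+μ)-1) * Γs))
      = (π * (2*π)^(-v) * Γs / Real.Gamma (μ+1)) * (a^(h+μ) * (2:ℝ)^(-μ) * Q^(v+(h+μ)-1)) := by
        rw [hK]; ring
    _ ≤ (π * (2*π)^(-v) * Γs / Real.Gamma (μ+1)) *
        (4^(v-1) * (9/5:ℝ)^h * (9/10:ℝ)^μ * R^(2-2*v)) := by
        apply mul_le_mul_of_nonneg_left star
        positivity
    _ = (π * (2*π)^(-v) * 4^(v-1) * (9/5:ℝ)^h) * ((9/10:ℝ)^μ * (Γs / Real.Gamma (μ+1))) * R^(2-2*v) := by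
        ring

lemma summable_aux {ρ : ℝ} (hρ0 : 0 < ρ) (hρ1 : ρ < 1) (K : ℕ) :
    Summable (fun j : ℕ => ((j:ℝ)+1)^K * ρ^j) := by
  have base : Summable (fun m : ℕ => (m:ℝ)^K * ρ^m) :=
    summable_pow_mul_geometric_of_norm_lt_one K (by rw [Real.norm_eq_abs, abs_of_pos hρ0]; exact hρ1)
  have shift : Summable (fun m : ℕ => ((m+1:ℕ):ℝ)^K * ρ^(m+1)) :=
    (summable_nat_add_iff 1).mpr base
  have := shift.mul_left ρ⁻¹
  apply this.congr
  intro m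
  push_cast
  rw [pow_succ]
  field_simp

lemma u_summable (β μ₁ μ₂ v h : ℝ) (N : ℕ) (hβ0 : 0 < β) (hμ₂ : 0 < μ₂) (hv : 1 < v)
    (hμ₁ : 0 ≤ μ₁) (hN : β * μ₁ ≤ (N : ℝ)) (hh : μ₁ - (N : ℝ) / β ≤ h) :
    Summable (fun j : ℕ => ((N:ℝ)+(j:ℝ))^μ₂ *
      ((9/10:ℝ)^(((N:ℝ)+(j:ℝ))/β - μ₁) *
        (Real.Gamma (v+h+(((N:ℝ)+(j:ℝ))/β - μ₁)-1) / Real.Gamma ((((N:ℝ)+(j:ℝ))/β - μ₁)+1)))) := by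
  set m₀ : ℝ := (N:ℝ)/β - μ₁ with hm₀def
  have hm₀ : 0 ≤ m₀ := by
    rw [hm₀def, sub_nonneg, le_div_iff₀ hβ0]
    linarith [hN]
  set s₀ : ℝ := v + h + m₀ - 1 with hs₀def
  have hs₀ : 0 < s₀ := by
    have : -m₀ ≤ h := by rw [hm₀def]; linarith
    rw [hs₀def]; linarith
  set n : ℕ := ⌈s₀+1⌉₊ with hn
  have hn2 : s₀ + 2 ≤ m₀ + 1 + n := by
    have := Nat.le_ceil (s₀+1)
    rw [← hn] at this
    linarith
  set K₁ : ℕ := ⌈μ₂⌉₊ with hK₁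
  set ρ : ℝ := (9/10:ℝ)^((1:ℝ)/β) with hρ
  have hρ0 : 0 < ρ := Real.rpow_pos_of_pos (by norm_num) _
  have hρ1 : ρ < 1 := Real.rpow_lt_one (by norm_num) (by norm_num) (by positivity)
  set D : ℝ := m₀ + 1 + n + 1/β with hD
  have hD0 : 0 < D := by rw [hD]; positivity
  set Cst : ℝ := ((N:ℝ)+1)^K₁ * (9/10:ℝ)^m₀ * (D^n / s₀) with hCst
  have hCst0 : 0 ≤ Cst := by
    have : (0:ℝ) ≤ (9/10:ℝ)^m₀ := Real.rpow_nonneg (by norm_num) _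
    rw [hCst]; positivity
  apply Summable.of_nonneg_of_le
    (f := fun j : ℕ => Cst * (((j:ℝ)+1)^(K₁+n) * ρ^j))
  · intro j
    have hμj : (0:ℝ) ≤ ((N:ℝ)+(j:ℝ))/β - μ₁ := by
      have : (0:ℝ) ≤ (j:ℝ)/β := by positivity
      have e : ((N:ℝ)+(j:ℝ))/β - μ₁ = m₀ + (j:ℝ)/β := by rw [hm₀def]; ring
      rw [e]; linarith
    have hg1 : 0 < Real.Gamma (v+h+(((N:ℝ)+(j:ℝ))/β - μ₁)-1) := by
      apply Real.Gamma_pos_of_pos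
      have e : v+h+(((N:ℝ)+(j:ℝ))/β - μ₁)-1 = s₀ + (j:ℝ)/β := by rw [hs₀def, hm₀def]; ring
      rw [e]; positivity
    have hg2 : 0 < Real.Gamma ((((N:ℝ)+(j:ℝ))/β - μ₁)+1) :=
      Real.Gamma_pos_of_pos (by linarith)
    have h1 : (0:ℝ) ≤ ((N:ℝ)+(j:ℝ))^μ₂ := Real.rpow_nonneg (by positivity) _
    have h2 : (0:ℝ) ≤ (9/10:ℝ)^(((N:ℝ)+(j:ℝ))/β - μ₁) := Real.rpow_nonneg (by norm_num) _
    positivity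
  · intro j
    have hx : (0:ℝ) ≤ (j:ℝ)/β := by positivity
    have eμ : ((N:ℝ)+(j:ℝ))/β - μ₁ = m₀ + (j:ℝ)/β := by rw [hm₀def]; ring
    have hg2 : 0 < Real.Gamma ((((N:ℝ)+(j:ℝ))/β - μ₁)+1) :=
      Real.Gamma_pos_of_pos (by rw [eμ]; positivity)
    -- bound the power factor
    have hb1 : ((N:ℝ)+(j:ℝ))^μ₂ ≤ ((N:ℝ)+1)^K₁ * ((j:ℝ)+1)^K₁ := by
      have step1 : ((N:ℝ)+(j:ℝ))^μ₂ ≤ ((N:ℝ)+(j:ℝ)+1)^μ₂ :=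
        Real.rpow_le_rpow (by positivity) (by linarith) hμ₂.le
      have hbase : (1:ℝ) ≤ (N:ℝ)+(j:ℝ)+1 := by
        have h1 := (Nat.cast_nonneg N : (0:ℝ) ≤ N)
        have h2 := (Nat.cast_nonneg j : (0:ℝ) ≤ j)
        linarith
      have step2 : ((N:ℝ)+(j:ℝ)+1)^μ₂ ≤ ((N:ℝ)+(j:ℝ)+1)^(K₁:ℝ) :=
        Real.rpow_le_rpow_of_exponent_le hbase (Nat.le_ceil μ₂)
      have step3 : ((N:ℝ)+(j:ℝ)+1)^(K₁:ℝ) = ((N:ℝ)+(j:ℝ)+1)^(K₁:ℕ) :=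
        Real.rpow_natCast _ _
      have step4 : ((N:ℝ)+(j:ℝ)+1)^(K₁:ℕ) ≤ (((N:ℝ)+1) * ((j:ℝ)+1))^(K₁:ℕ) := by
        apply pow_le_pow_left₀ (by positivity)
        have h1 := (Nat.cast_nonneg N : (0:ℝ) ≤ N)
        have h2 := (Nat.cast_nonneg j : (0:ℝ) ≤ j)
        nlinarith
      calc ((N:ℝ)+(j:ℝ))^μ₂ ≤ ((N:ℝ)+(j:ℝ)+1)^μ₂ := step1
        _ ≤ ((N:ℝ)+(j:ℝ)+1)^(K₁:ℝ) := step2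
        _ = ((N:ℝ)+(j:ℝ)+1)^(K₁:ℕ) := step3
        _ ≤ (((N:ℝ)+1) * ((j:ℝ)+1))^(K₁:ℕ) := step4
        _ = ((N:ℝ)+1)^K₁ * ((j:ℝ)+1)^K₁ := mul_pow _ _ _
    -- the geometric factor (equality)
    have hb2 : (9/10:ℝ)^(((N:ℝ)+(j:ℝ))/β - μ₁) = (9/10:ℝ)^m₀ * ρ^j := by
      rw [eμ, Real.rpow_add (by norm_num : (0:ℝ) < 9/10), hρ]
      congr 1
      rw [show (j:ℝ)/β = (1/β) * (j:ℝ) by ring, Real.rpow_mul (by norm_num : (0:ℝ) ≤ 9/10),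
        Real.rpow_natCast]
    -- Gamma ratio bound
    have hb3 : Real.Gamma (v+h+(((N:ℝ)+(j:ℝ))/β - μ₁)-1) / Real.Gamma ((((N:ℝ)+(j:ℝ))/β - μ₁)+1)
        ≤ D^n * ((j:ℝ)+1)^n / s₀ := by
      have key := Gamma_ratio_bound s₀ m₀ hs₀ hm₀ n hn2 ((j:ℝ)/β) hx
      have e1 : v+h+(((N:ℝ)+(j:ℝ))/β - μ₁)-1 = s₀ + (j:ℝ)/β := by rw [hs₀def, eμ]; ring
      have e2 : (((N:ℝ)+(j:ℝ))/β - μ₁)+1 = m₀ + (j:ℝ)/β + 1 := by rw [eμ]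
      rw [e1, e2, div_le_div_iff₀ (Real.Gamma_pos_of_pos (by positivity)) hs₀]
      have hpow : (m₀ + 1 + (j:ℝ)/β + n)^n ≤ D^n * ((j:ℝ)+1)^n := by
        rw [← mul_pow]
        apply pow_le_pow_left₀ (by positivity)
        have hj : (j:ℝ)/β ≤ (1/β) * ((j:ℝ)+1) := by
          rw [div_eq_mul_inv, one_div]
          have : (0:ℝ) < β⁻¹ := by positivity
          nlinarith
        have hD1 : m₀ + 1 + (n:ℝ) ≤ (m₀ + 1 + n) * ((j:ℝ)+1) := by
          have h1 : (0:ℝ) ≤  m₀ + 1 + (n:ℝ) := by positivity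
          have h2 : (1:ℝ) ≤ (j:ℝ)+1 := by
            have := (Nat.cast_nonneg j : (0:ℝ) ≤ j); linarith
          nlinarith
        rw [hD]
        nlinarith
      calc Real.Gamma (s₀ + (j:ℝ)/β) * s₀ ≤ Real.Gamma (m₀ + (j:ℝ)/β + 1) * (m₀ + 1 + (j:ℝ)/β + n)^n := by
            rw [mul_comm _ s₀]; exact key
        _ ≤ Real.Gamma (m₀ + (j:ℝ)/β + 1) * (D^n * ((j:ℝ)+1)^n) := by
            apply mul_le_mul_of_nonneg_left hpow (Real.Gamma_pos_of_pos (by positivity)).le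
        _ = D^n * ((j:ℝ)+1)^n * Real.Gamma (m₀ + (j:ℝ)/β + 1) := by ring
    -- combine
    have h2nn : (0:ℝ) ≤ (9/10:ℝ)^m₀ * ρ^j := by
      have : (0:ℝ) ≤ (9/10:ℝ)^m₀ := Real.rpow_nonneg (by norm_num) _
      positivity
    have hg1 : 0 < Real.Gamma (v+h+(((N:ℝ)+(j:ℝ))/β - μ₁)-1) := by
      apply Real.Gamma_pos_of_pos
      rw [show v+h+(((N:ℝ)+(j:ℝ))/β - μ₁)-1 = s₀ + (j:ℝ)/β by rw [hs₀def, eμ]; ring]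
      positivity
    calc ((N:ℝ)+(j:ℝ))^μ₂ * ((9/10:ℝ)^(((N:ℝ)+(j:ℝ))/β - μ₁) *
          (Real.Gamma (v+h+(((N:ℝ)+(j:ℝ))/β - μ₁)-1) / Real.Gamma ((((N:ℝ)+(j:ℝ))/β - μ₁)+1)))
        ≤ (((N:ℝ)+1)^K₁ * ((j:ℝ)+1)^K₁) * (((9/10:ℝ)^m₀ * ρ^j) * (D^n * ((j:ℝ)+1)^n / s₀)) := by
          apply mul_le_mul hb1
          · rw [hb2]
            exact mul_le_mul_of_nonneg_left hb3 h2nn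
          · have h2 : (0:ℝ) ≤ (9/10:ℝ)^(((N:ℝ)+(j:ℝ))/β - μ₁) := Real.rpow_nonneg (by norm_num) _
            positivity
          · positivity
      _ = Cst * (((j:ℝ)+1)^(K₁+n) * ρ^j) := by rw [hCst, pow_add]; ring
  · exact (summable_aux hρ0 hρ1 (K₁+n)).mul_left Cst

/-- For `μ₂ > 0`, `v > 1`, `μ₁ ≥ 0`, integer `N ≥ βμ₁` and `h ≥ μ₁ − N/β`, there is `C`
such that for all `r, r' > 0`, `R > 0` with `rr' < 9R²/10`:
`Σ_{k=N}^∞ k^{μ₂} |G_{k/β−μ₁,v,h}(r,r',R)| ≤ C R^{2−2v}`. -/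
theorem G_weighted_sum_bound_far (β : ℝ) (hβ0 : 0 < β) (hβ1 : β < 1)
    (μ₁ μ₂ v h : ℝ) (N : ℕ) (hμ₂ : 0 < μ₂) (hv : 1 < v) (hμ₁ : 0 ≤ μ₁)
    (hN : β * μ₁ ≤ (N : ℝ)) (hh : μ₁ - (N : ℝ) / β ≤ h) :
    ∃ C > 0, ∀ r r' R : ℝ, 0 < r → 0 < r' → 0 < R → r * r' < 9 * R ^ 2 / 10 →
      (∑' j : ℕ, ((N : ℝ) + (j : ℝ)) ^ μ₂ *
          |Gfun (((N : ℝ) + (j : ℝ)) / β - μ₁) v h r r' R|) ≤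
        C * R ^ (2 - 2 * v) := by

  have hA0 : (0:ℝ) < π * (2*π)^(-v) * 4^(v-1) * (9/5:ℝ)^h := by
    have h1 : (0:ℝ) < (2*π)^(-v) := Real.rpow_pos_of_pos (by positivity) _
    have h2 : (0:ℝ) < (4:ℝ)^(v-1) := Real.rpow_pos_of_pos (by norm_num) _
    have h3 : (0:ℝ) < (9/5:ℝ)^h := Real.rpow_pos_of_pos (by norm_num) _
    positivity
  -- properties of the order parameters
  have hj2 : ∀ j : ℕ, (N:ℝ)/β ≤ ((N:ℝ)+(j:ℝ))/β := by
    intro j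
    have hcast : (0:ℝ) ≤ (j:ℝ) := Nat.cast_nonneg j
    exact div_le_div_of_nonneg_right (by linarith) hβ0.le
  have hμj : ∀ j : ℕ, 0 ≤ ((N:ℝ)+(j:ℝ))/β - μ₁ := by
    intro j
    have h1 : μ₁ ≤ (N:ℝ)/β := by rw [le_div_iff₀ hβ0]; linarith
    have h2 := hj2 j
    linarith
  have hpj : ∀ j : ℕ, 0 ≤ h + (((N:ℝ)+(j:ℝ))/β - μ₁) := by
    intro j
    have h2 := hj2 j
    linarith
  set w : ℕ → ℝ := fun j => ((N:ℝ)+(j:ℝ))^μ₂ *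
      ((9/10:ℝ)^(((N:ℝ)+(j:ℝ))/β - μ₁) *
        (Real.Gamma (v+h+(((N:ℝ)+(j:ℝ))/β - μ₁)-1) / Real.Gamma ((((N:ℝ)+(j:ℝ))/β - μ₁)+1))) with hw
  have hwsum : Summable w := u_summable β μ₁ μ₂ v h N hβ0 hμ₂ hv hμ₁ hN hh
  have hwnn : ∀ j, 0 ≤ w j := by
    intro j
    have hg1 : 0 < Real.Gamma (v+h+(((N:ℝ)+(j:ℝ))/β - μ₁)-1) :=
      Real.Gamma_pos_of_pos (by have := hpj j; linarith)
    have hg2 : 0 < Real.Gamma ((((N:ℝ)+(j:ℝ))/β - μ₁)+1) :=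
      Real.Gamma_pos_of_pos (by have := hμj j; linarith)
    have h1 : (0:ℝ) ≤ ((N:ℝ)+(j:ℝ))^μ₂ := Real.rpow_nonneg (by positivity) _
    have h2 : (0:ℝ) ≤ (9/10:ℝ)^(((N:ℝ)+(j:ℝ))/β - μ₁) := Real.rpow_nonneg (by norm_num) _
    rw [hw]
    positivity
  set S : ℝ := ∑' j, w j with hS
  have hS0 : 0 ≤ S := tsum_nonneg hwnn
  refine ⟨(π * (2*π)^(-v) * 4^(v-1) * (9/5:ℝ)^h) * S + 1, by nlinarith, ?_⟩
  intro r r' R hr hr' hR hrr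
  have hRv : (0:ℝ) < R^(2-2*v) := Real.rpow_pos_of_pos hR _
  have hbound : ∀ j : ℕ, ((N : ℝ) + (j : ℝ)) ^ μ₂ *
      |Gfun (((N : ℝ) + (j : ℝ)) / β - μ₁) v h r r' R|
      ≤ ((π * (2*π)^(-v) * 4^(v-1) * (9/5:ℝ)^h) * R^(2-2*v)) * w j := by
    intro j
    have hG := Gfun_bound v h (((N:ℝ)+(j:ℝ))/β - μ₁) r r' R hv (hμj j) (hpj j) hr hr' hR hrr
    have hk : (0:ℝ) ≤ ((N:ℝ)+(j:ℝ))^μ₂ := Real.rpow_nonneg (by positivity) _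
    calc ((N : ℝ) + (j : ℝ)) ^ μ₂ * |Gfun (((N : ℝ) + (j : ℝ)) / β - μ₁) v h r r' R|
        ≤ ((N : ℝ) + (j : ℝ)) ^ μ₂ * ((π * (2*π)^(-v) * 4^(v-1) * (9/5:ℝ)^h) *
          ((9/10:ℝ)^(((N:ℝ)+(j:ℝ))/β - μ₁) *
            (Real.Gamma (v+h+(((N:ℝ)+(j:ℝ))/β - μ₁)-1) /
              Real.Gamma ((((N:ℝ)+(j:ℝ))/β - μ₁)+1))) * R^(2-2*v)) :=
          mul_le_mul_of_nonneg_left hG hk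
      _ = ((π * (2*π)^(-v) * 4^(v-1) * (9/5:ℝ)^h) * R^(2-2*v)) * w j := by rw [hw]; ring
  have htermnn : ∀ j : ℕ, 0 ≤ ((N : ℝ) + (j : ℝ)) ^ μ₂ *
      |Gfun (((N : ℝ) + (j : ℝ)) / β - μ₁) v h r r' R| := by
    intro j
    exact mul_nonneg (Real.rpow_nonneg (by positivity) _) (abs_nonneg _)
  have htermsum : Summable (fun j : ℕ => ((N : ℝ) + (j : ℝ)) ^ μ₂ *
      |Gfun (((N : ℝ) + (j : ℝ)) / β - μ₁) v h r r' R|) :=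
    Summable.of_nonneg_of_le htermnn hbound
      (hwsum.mul_left _)
  calc (∑' j : ℕ, ((N : ℝ) + (j : ℝ)) ^ μ₂ *
          |Gfun (((N : ℝ) + (j : ℝ)) / β - μ₁) v h r r' R|)
      ≤ ∑' j : ℕ, ((π * (2*π)^(-v) * 4^(v-1) * (9/5:ℝ)^h) * R^(2-2*v)) * w j :=
        Summable.tsum_le_tsum hbound htermsum (hwsum.mul_left _)
    _ = ((π * (2*π)^(-v) * 4^(v-1) * (9/5:ℝ)^h) * R^(2-2*v)) * S := by
        rw [hS]; exact tsum_mul_left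
    _ ≤ ((π * (2*π)^(-v) * 4^(v-1) * (9/5:ℝ)^h) * S + 1) * R^(2-2*v) := by
        nlinarith
end

section
/- Let v ≥ 1 and 0 ≤ z₁ ≤ z₂. Then |I'_v(z₂) − I'_v(z₁)| ≤ (v/(2^v Γ(v+1)))·(z₂^{v−1} − z₁^{v−1}) + (z₂−z₁)·(1 + v/2)·I_v(z₂). In particular, if moreover v < 2, then |I'_v(z₂) − I'_v(z₁)| ≤ (v/(2^v Γ(v+1)))·(z₂−z₁)^{v−1} + (z₂−z₁)·(1 + v/2)·I_v(z₂). -/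
open Real

lemma gammaPos {v : ℝ} (hv : 1 ≤ v) (j : ℕ) : 0 < Real.Gamma (v + (j : ℝ) + 1) :=
  Real.Gamma_pos_of_pos (by have := Nat.cast_nonneg (α := ℝ) j; linarith)

/-- Derivative-series term with base `q` (think `q = z/2`). -/
noncomputable def gterm (v q : ℝ) (j : ℕ) : ℝ :=
  (v + 2 * j) / 2 * q ^ (v + 2 * (j : ℝ) - 1) / ((j.factorial : ℝ) * Real.Gamma (v + (j : ℝ) + 1))

lemma summable_gterm {v : ℝ} (hv : 1 ≤ v) {q : ℝ} (hq : 0 ≤ q) : Summable (gterm v q) := by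
  rcases eq_or_lt_of_le hq with hq0 | hq0
  · apply summable_of_ne_finset_zero (s := {0})
    intro j hj
    have hj0 : j ≠ 0 := by simpa using hj
    have : (0:ℝ) < v + 2 * (j:ℝ) - 1 := by
      have : (1:ℝ) ≤ (j:ℝ) := by exact_mod_cast Nat.one_le_iff_ne_zero.2 hj0
      linarith
    simp [gterm, ← hq0, Real.zero_rpow (ne_of_gt this)]
  · apply summable_of_ratio_norm_eventually_le (r := 1/2) (by norm_num)
    filter_upwards [Filter.eventually_ge_atTop (⌈4 * q ^ 2⌉₊ + 1)] with j hj
    have hjR : 4 * q ^ 2 + 1 ≤ (j : ℝ) := by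
      have h1 : (⌈4 * q ^ 2⌉₊ : ℝ) + 1 ≤ (j : ℝ) := by exact_mod_cast hj
      have h2 : 4 * q ^ 2 ≤ (⌈4 * q ^ 2⌉₊ : ℝ) := Nat.le_ceil _
      linarith
    have hG : 0 < Real.Gamma (v + (j : ℝ) + 1) := gammaPos hv j
    have hF : 0 < ((j.factorial : ℝ)) := by exact_mod_cast j.factorial_pos
    have hQ : 0 < q ^ (v + 2 * (j:ℝ) - 1) := Real.rpow_pos_of_pos hq0 _
    have hGrec : Real.Gamma (v + ((j:ℝ) + 1) + 1) = (v + (j:ℝ) + 1) * Real.Gamma (v + (j:ℝ) + 1) := by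
      rw [show v + ((j:ℝ) + 1) + 1 = (v + (j:ℝ) + 1) + 1 by ring,
        Real.Gamma_add_one (by positivity)]
    have hFrec : (((j+1).factorial : ℝ)) = ((j:ℝ) + 1) * (j.factorial : ℝ) := by
      push_cast [Nat.factorial_succ]; ring
    have hQrec : q ^ (v + 2 * ((j:ℝ) + 1) - 1) = q ^ (v + 2 * (j:ℝ) - 1) * q ^ 2 := by
      rw [← Real.rpow_natCast q 2, ← Real.rpow_add hq0]; ring_nf
    have e1 : gterm v q (j+1) = (v + 2*(j:ℝ) + 2) / 2 * (q ^ (v + 2 * (j:ℝ) - 1) * q ^ 2) /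
        (((j:ℝ) + 1) * (j.factorial : ℝ) * ((v + (j:ℝ) + 1) * Real.Gamma (v + (j:ℝ) + 1))) := by
      unfold gterm
      push_cast
      rw [hQrec, hGrec, hFrec]
      ring
    have hpos1 : (0:ℝ) < gterm v q j := by
      unfold gterm; positivity
    have hpos2 : (0:ℝ) < gterm v q (j+1) := by
      rw [e1]; positivity
    have hJ1 : (1:ℝ) ≤ (j:ℝ) := by nlinarith [sq_nonneg q]
    have key : (v + 2*(j:ℝ) + 2) * q ^ 2 * 2 ≤ (v + 2*(j:ℝ)) * (((j:ℝ)+1) * (v + (j:ℝ)+1)) := by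
      have step1 : 2*(v+2*(j:ℝ)+2)*q^2 ≤ 4*(v+2*(j:ℝ))*q^2 := by nlinarith [sq_nonneg q]
      have step2 : 4*(v+2*(j:ℝ))*q^2 ≤ (v+2*(j:ℝ))*((j:ℝ)+1) := by nlinarith [sq_nonneg q]
      have step3 : (v+2*(j:ℝ))*((j:ℝ)+1) ≤ (v+2*(j:ℝ))*(((j:ℝ)+1)*(v+(j:ℝ)+1)) := by
        nlinarith [sq_nonneg q]
      linarith
    rw [Real.norm_eq_abs, Real.norm_eq_abs, abs_of_pos hpos1, abs_of_pos hpos2, e1]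
    unfold gterm
    rw [div_le_iff₀ (by positivity)]
    have cancel : 1 / 2 * ((v + 2 * (j:ℝ)) / 2 * q ^ (v + 2 * (j:ℝ) - 1) /
          ((j.factorial:ℝ) * Real.Gamma (v + (j:ℝ) + 1))) *
          (((j:ℝ) + 1) * (j.factorial:ℝ) * ((v + (j:ℝ) + 1) * Real.Gamma (v + (j:ℝ) + 1))) =
        (v + 2*(j:ℝ)) * (((j:ℝ)+1) * (v + (j:ℝ)+1)) * q ^ (v + 2 * (j:ℝ) - 1) / 4 := by
      field_simp
      ring
    push_cast
    rw [cancel]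
    nlinarith [mul_le_mul_of_nonneg_right key hQ.le]

lemma rpow_sub_rpow_le {a b p : ℝ} (hb : 0 ≤ b) (hba : b ≤ a) (hp : 1 ≤ p) :
    a ^ p - b ^ p ≤ p * a ^ (p - 1) * (a - b) := by
  rcases eq_or_lt_of_le hba with rfl | hlt
  · simp
  have hderiv : ∀ x : ℝ, HasDerivAt (fun y : ℝ => y ^ p) (p * x ^ (p - 1)) x := by
    intro x
    simpa [mul_comm] using Real.hasDerivAt_rpow_const (x := x) (p := p) (Or.inr hp)
  obtain ⟨c, hc, hceq⟩ := exists_hasDerivAt_eq_slope (fun y => y ^ p) (fun x => p * x ^ (p - 1))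
    hlt (fun x _ => (hderiv x).continuousAt.continuousWithinAt) (fun x _ => hderiv x)
  have hc0 : 0 ≤ c := le_trans hb hc.1.le
  have hcle : c ^ (p - 1) ≤ a ^ (p - 1) :=
    Real.rpow_le_rpow hc0 hc.2.le (by linarith)
  have hab : 0 < a - b := by linarith
  have : a ^ p - b ^ p = p * c ^ (p - 1) * (a - b) := by
    field_simp at hceq
    linarith [hceq]
  rw [this]
  have hp0 : 0 ≤ p := by linarith
  nlinarith [mul_le_mul_of_nonneg_right (mul_le_mul_of_nonneg_left hcle hp0) hab.le]

noncomputable def fterm (v z : ℝ) (j : ℕ) : ℝ :=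
  (z / 2) ^ (v + 2 * (j : ℝ)) / ((j.factorial : ℝ) * Real.Gamma (v + (j : ℝ) + 1))

lemma besselI_eq_tsum_fterm (v z : ℝ) : besselI v z = ∑' j, fterm v z j := by
  rfl

lemma fterm_nonneg {v : ℝ} (hv : 1 ≤ v) {z : ℝ} (hz : 0 ≤ z) (j : ℕ) : 0 ≤ fterm v z j := by
  unfold fterm
  have := gammaPos hv j
  have : (0:ℝ) ≤ (z/2) ^ (v + 2*(j:ℝ)) := Real.rpow_nonneg (by linarith) _
  positivity

lemma summable_fterm {v : ℝ} (hv : 1 ≤ v) {z : ℝ} (hz : 0 ≤ z) : Summable (fterm v z) := by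
  rcases eq_or_lt_of_le hz with rfl | hz0
  · have : (fterm v 0) = fun _ => 0 := by
      funext j
      have hp : v + 2 * (j:ℝ) ≠ 0 := by have := Nat.cast_nonneg (α := ℝ) j; positivity
      simp [fterm, Real.zero_rpow hp]
    rw [this]; exact summable_zero
  · refine Summable.of_nonneg_of_le (fterm_nonneg hv hz)
      (fun j => ?_) ((summable_gterm hv (by linarith : (0:ℝ) ≤ z/2)).mul_left z)
    have hC : 0 < (j.factorial : ℝ) * Real.Gamma (v + (j:ℝ) + 1) := by
      have := gammaPos hv j
      have : (0:ℝ) < (j.factorial : ℝ) := by exact_mod_cast j.factorial_pos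
      positivity
    have hX : (0:ℝ) ≤ (z/2) ^ (v + 2*(j:ℝ) - 1) := Real.rpow_nonneg (by linarith) _
    have hsplit : (z/2) ^ (v + 2*(j:ℝ)) = (z/2) ^ (v + 2*(j:ℝ) - 1) * (z/2) := by
      rw [show v + 2*(j:ℝ) = (v + 2*(j:ℝ) - 1) + 1 by ring,
        Real.rpow_add_one (by positivity)]
      norm_num
    have hrhs : z * gterm v (z/2) j =
        (z * ((v + 2*(j:ℝ))/2) * (z/2) ^ (v + 2*(j:ℝ) - 1)) /
          ((j.factorial : ℝ) * Real.Gamma (v + (j:ℝ) + 1)) := by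
      unfold gterm; push_cast; ring
    unfold fterm
    rw [hsplit, hrhs, div_le_div_iff_of_pos_right hC]
    have hj : (0:ℝ) ≤ (j:ℝ) := Nat.cast_nonneg j
    nlinarith [mul_nonneg hX hz0.le]

lemma besselI_hasDerivAt {v : ℝ} (hv : 1 ≤ v) {R z : ℝ} (hR : 0 < R)
    (hz : z ∈ Set.Ioo (-R) R) :
    HasDerivAt (besselI v) (∑' j : ℕ, gterm v (z / 2) j) z := by
  have h := hasDerivAt_tsum_of_isPreconnected
    (u := fun j => gterm v (R/2) j)
    (g := fun j z => fterm v z j) (g' := fun j z => gterm v (z/2) j)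
    (summable_gterm hv (by positivity)) isOpen_Ioo (convex_Ioo (-R) R).isPreconnected
    (fun j y _ => ?_) (fun j y hy => ?_) (y₀ := 0) ?_ ?_ hz
  · exact h
  · -- HasDerivAt for each term
    have hp : 1 ≤ v + 2 * (j:ℝ) := by have := Nat.cast_nonneg (α := ℝ) j; linarith
    have h1 : HasDerivAt (fun w : ℝ => w / 2) (1/2) y := (hasDerivAt_id y).div_const 2
    have h2 := (h1.rpow_const (p := v + 2 * (j:ℝ)) (Or.inr hp)).div_const
      ((j.factorial : ℝ) * Real.Gamma (v + (j:ℝ) + 1))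
    refine h2.congr_deriv ?_
    unfold gterm; ring
  · -- uniform bound
    have hy' : |y| ≤ R := by
      rw [abs_le]; exact ⟨hy.1.le, hy.2.le⟩
    have hC : 0 < (j.factorial : ℝ) * Real.Gamma (v + (j:ℝ) + 1) := by
      have := gammaPos hv j
      have : (0:ℝ) < (j.factorial : ℝ) := by exact_mod_cast j.factorial_pos
      positivity
    have hco : (0:ℝ) ≤ (v + 2 * (j:ℕ)) / 2 := by
      have := Nat.cast_nonneg (α := ℝ) j; positivity
    unfold gterm
    rw [Real.norm_eq_abs, abs_div, abs_mul, abs_of_nonneg hco, abs_of_pos hC]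
    rw [div_le_div_iff_of_pos_right hC]
    refine mul_le_mul_of_nonneg_left ?_ hco
    calc |(y/2) ^ (v + 2*(j:ℝ) - 1)| ≤ |y/2| ^ (v + 2*(j:ℝ) - 1) :=
          Real.abs_rpow_le_abs_rpow _ _
      _ ≤ (R/2) ^ (v + 2*(j:ℝ) - 1) := by
          apply Real.rpow_le_rpow (abs_nonneg _)
          · rw [abs_div]; simp only [abs_two]
            exact div_le_div_of_nonneg_right hy' (by norm_num) |>.trans_eq rfl
          · have := Nat.cast_nonneg (α := ℝ) j; linarith
  · exact ⟨by linarith, hR⟩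
  · have : (fun j => fterm v 0 j) = fun _ => 0 := by
      funext j
      have hp : v + 2 * (j:ℝ) ≠ 0 := by have := Nat.cast_nonneg (α := ℝ) j; positivity
      simp [fterm, Real.zero_rpow hp]
    rw [this]; exact summable_zero

lemma gterm_zero {v : ℝ} (hv : 1 ≤ v) {z : ℝ} (hz : 0 ≤ z) :
    gterm v (z / 2) 0 = v / ((2:ℝ) ^ v * Real.Gamma (v + 1)) * z ^ (v - 1) := by
  have hG : 0 < Real.Gamma (v + 1) := Real.Gamma_pos_of_pos (by linarith)
  have h2v : (0:ℝ) < (2:ℝ) ^ v := Real.rpow_pos_of_pos two_pos v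
  have hdiv : (z / 2) ^ (v - 1) = z ^ (v - 1) / (2:ℝ) ^ (v - 1) :=
    Real.div_rpow hz (by norm_num) _
  have h2 : (2:ℝ) ^ (v - 1) = (2:ℝ) ^ v / 2 := by
    rw [Real.rpow_sub two_pos, Real.rpow_one]
  simp only [gterm, Nat.cast_zero, Nat.factorial_zero, Nat.cast_one, mul_zero, add_zero, one_mul]
  rw [hdiv, h2]
  field_simp

lemma gterm_mono {v : ℝ} (hv : 1 ≤ v) {z₁ z₂ : ℝ} (hz₁ : 0 ≤ z₁) (h12 : z₁ ≤ z₂) (j : ℕ) :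
    gterm v (z₁ / 2) j ≤ gterm v (z₂ / 2) j := by
  have hC : 0 < (j.factorial : ℝ) * Real.Gamma (v + (j:ℝ) + 1) := by
    have := gammaPos hv j
    have : (0:ℝ) < (j.factorial : ℝ) := by exact_mod_cast j.factorial_pos
    positivity
  have hco : (0:ℝ) ≤ (v + 2 * (j:ℕ)) / 2 := by
    have := Nat.cast_nonneg (α := ℝ) j; positivity
  unfold gterm
  rw [div_le_div_iff_of_pos_right hC]
  refine mul_le_mul_of_nonneg_left ?_ hco
  apply Real.rpow_le_rpow (by linarith) (by linarith)
  have := Nat.cast_nonneg (α := ℝ) j; linarith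

lemma tail_le {v : ℝ} (hv : 1 ≤ v) {z₁ z₂ : ℝ} (hz₁ : 0 ≤ z₁) (h12 : z₁ ≤ z₂) (k : ℕ) :
    gterm v (z₂ / 2) (k + 1) - gterm v (z₁ / 2) (k + 1) ≤
      (z₂ - z₁) * (1 + v / 2) * fterm v z₂ k := by
  have hz₂ : 0 ≤ z₂ := hz₁.trans h12
  have hK : (0:ℝ) ≤ (k:ℝ) := Nat.cast_nonneg k
  have hG : 0 < Real.Gamma (v + (k:ℝ) + 1) := gammaPos hv k
  have hF : (0:ℝ) < (k.factorial : ℝ) := by exact_mod_cast k.factorial_pos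
  set K := (k:ℝ)
  set F := (k.factorial : ℝ)
  set G := Real.Gamma (v + K + 1) with hGdef
  set p := v + 2 * K + 1 with hp
  have hp1 : 1 ≤ p := by rw [hp]; linarith
  have hGrec : Real.Gamma (v + (K + 1) + 1) = (v + K + 1) * G := by
    rw [show v + (K + 1) + 1 = (v + K + 1) + 1 by ring, Real.Gamma_add_one (by positivity)]
  have e : ∀ z : ℝ, gterm v (z / 2) (k + 1) =
      (z / 2) ^ p * ((v + 2 * K + 2) / 2 / ((K + 1) * F * ((v + K + 1) * G))) := by
    intro z
    unfold gterm
    push_cast [Nat.factorial_succ]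
    rw [hGrec, show v + 2 * (K + 1) - 1 = p by rw [hp]; ring]
    ring
  set A := (v + 2 * K + 2) / 2 / ((K + 1) * F * ((v + K + 1) * G)) with hA
  have hApos : 0 ≤ A := by rw [hA]; positivity
  have hd : 0 ≤ z₂ - z₁ := sub_nonneg.2 h12
  set X := (z₂ / 2) ^ (p - 1) with hX
  have hXnn : 0 ≤ X := Real.rpow_nonneg (by linarith) _
  have h1 : (z₂ / 2) ^ p - (z₁ / 2) ^ p ≤ p * X * ((z₂ - z₁) / 2) := by
    have := rpow_sub_rpow_le (by linarith : (0:ℝ) ≤ z₁ / 2) (by linarith : z₁ / 2 ≤ z₂ / 2) hp1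
    rw [hX]
    nlinarith [this]
  have hfrw : fterm v z₂ k = X / (F * G) := by
    unfold fterm
    rw [hX, show p - 1 = v + 2 * K by rw [hp]; ring]
  have hnum : p / 2 * A ≤ (1 + v / 2) / (F * G) := by
    have hArw : p / 2 * A = p * (v + 2 * K + 2) / 4 / ((K + 1) * F * ((v + K + 1) * G)) := by
      rw [hA]; ring
    rw [hArw, div_le_div_iff₀ (by positivity) (by positivity)]
    have a1 : v + 2 * K + 1 ≤ 2 * (v + K + 1) := by linarith
    have a2 : v + 2 * K + 2 ≤ (v + 2) * (K + 1) := by nlinarith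
    have key : p * (v + 2 * K + 2) ≤ 2 * (v + K + 1) * ((v + 2) * (K + 1)) := by
      rw [hp]
      have := mul_le_mul a1 a2 (by linarith) (by linarith)
      linarith
    have expand : (1 + v / 2) * ((K + 1) * F * ((v + K + 1) * G)) =
        2 * (v + K + 1) * ((v + 2) * (K + 1)) / 4 * (F * G) := by ring
    rw [expand]
    exact mul_le_mul_of_nonneg_right ((div_le_div_iff_of_pos_right (by norm_num)).2 key) (mul_pos hF hG).le
  calc gterm v (z₂ / 2) (k + 1) - gterm v (z₁ / 2) (k + 1)
      = ((z₂ / 2) ^ p - (z₁ / 2) ^ p) * A := by rw [e z₂, e z₁]; ring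
    _ ≤ p * X * ((z₂ - z₁) / 2) * A := by
        apply mul_le_mul_of_nonneg_right h1 hApos
    _ = ((z₂ - z₁) * X) * (p / 2 * A) := by ring
    _ ≤ ((z₂ - z₁) * X) * ((1 + v / 2) / (F * G)) :=
        mul_le_mul_of_nonneg_left hnum (mul_nonneg hd hXnn)
    _ = (z₂ - z₁) * (1 + v / 2) * (X / (F * G)) := by ring
    _ = (z₂ - z₁) * (1 + v / 2) * fterm v z₂ k := by rw [hfrw]

lemma rpow_sub_le {x y p : ℝ} (hy : 0 ≤ y) (hxy : y ≤ x) (hp0 : 0 ≤ p) (hp1 : p ≤ 1) :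
    x ^ p - y ^ p ≤ (x - y) ^ p := by
  have hx : 0 ≤ x := le_trans hy hxy
  have hxy' : 0 ≤ x - y := sub_nonneg.2 hxy
  have key := NNReal.rpow_add_le_add_rpow (x - y).toNNReal y.toNNReal hp0 hp1
  rw [← Real.toNNReal_add hxy' hy, sub_add_cancel] at key
  have key2 := NNReal.coe_le_coe.2 key
  rw [NNReal.coe_add, NNReal.coe_rpow, NNReal.coe_rpow, NNReal.coe_rpow,
    Real.coe_toNNReal _ hx, Real.coe_toNNReal _ hxy', Real.coe_toNNReal _ hy] at key2
  linarith

set_option maxHeartbeats 2000000 in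
/-- For `v ≥ 1` and `0 ≤ z₁ ≤ z₂`:
`|I'_v(z₂) − I'_v(z₁)| ≤ (v/(2^v Γ(v+1)))(z₂^{v−1} − z₁^{v−1}) + (z₂−z₁)(1+v/2) I_v(z₂)`;
if moreover `v < 2` then
`|I'_v(z₂) − I'_v(z₁)| ≤ (v/(2^v Γ(v+1)))(z₂−z₁)^{v−1} + (z₂−z₁)(1+v/2) I_v(z₂)`. -/
theorem besselI_deriv_holder (v z₁ z₂ : ℝ) (hv : 1 ≤ v) (hz₁ : 0 ≤ z₁) (h12 : z₁ ≤ z₂) :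
    |deriv (fun z => besselI v z) z₂ - deriv (fun z => besselI v z) z₁| ≤
        v / ((2 : ℝ) ^ v * Real.Gamma (v + 1)) * (z₂ ^ (v - 1) - z₁ ^ (v - 1)) +
          (z₂ - z₁) * (1 + v / 2) * besselI v z₂ ∧
      (v < 2 →
        |deriv (fun z => besselI v z) z₂ - deriv (fun z => besselI v z) z₁| ≤
          v / ((2 : ℝ) ^ v * Real.Gamma (v + 1)) * (z₂ - z₁) ^ (v - 1) +
            (z₂ - z₁) * (1 + v / 2) * besselI v z₂) := by
  have hz₂ : 0 ≤ z₂ := hz₁.trans h12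
  have hRpos : (0:ℝ) < z₂ + 1 := by linarith
  have hmem₂ : z₂ ∈ Set.Ioo (-(z₂ + 1)) (z₂ + 1) := ⟨by linarith, by linarith⟩
  have hmem₁ : z₁ ∈ Set.Ioo (-(z₂ + 1)) (z₂ + 1) := ⟨by linarith, by linarith⟩
  have hd₂ := (besselI_hasDerivAt hv hRpos hmem₂).deriv
  have hd₁ := (besselI_hasDerivAt hv hRpos hmem₁).deriv
  have S₁ : Summable (gterm v (z₁ / 2)) := summable_gterm hv (by linarith)
  have S₂ : Summable (gterm v (z₂ / 2)) := summable_gterm hv (by linarith)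
  have hDnn : 0 ≤ (∑' j, gterm v (z₂ / 2) j) - ∑' j, gterm v (z₁ / 2) j :=
    sub_nonneg.2 (Summable.tsum_le_tsum (gterm_mono hv hz₁ h12) S₁ S₂)
  have habs : |deriv (fun z => besselI v z) z₂ - deriv (fun z => besselI v z) z₁| =
      ∑' j, (gterm v (z₂ / 2) j - gterm v (z₁ / 2) j) := by
    rw [show (fun z => besselI v z) = besselI v from rfl, hd₂, hd₁, abs_of_nonneg hDnn,
      ← Summable.tsum_sub S₂ S₁]
  have hsplit := Summable.tsum_eq_zero_add (f := fun j => gterm v (z₂ / 2) j - gterm v (z₁ / 2) j)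
    (S₂.sub S₁)
  have h0 : gterm v (z₂ / 2) 0 - gterm v (z₁ / 2) 0 =
      v / ((2:ℝ) ^ v * Real.Gamma (v + 1)) * (z₂ ^ (v - 1) - z₁ ^ (v - 1)) := by
    rw [gterm_zero hv hz₂, gterm_zero hv hz₁]; ring
  have htail : (∑' k : ℕ, (gterm v (z₂ / 2) (k + 1) - gterm v (z₁ / 2) (k + 1))) ≤
      (z₂ - z₁) * (1 + v / 2) * besselI v z₂ := by
    calc (∑' k : ℕ, (gterm v (z₂ / 2) (k + 1) - gterm v (z₁ / 2) (k + 1)))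
        ≤ ∑' k : ℕ, (z₂ - z₁) * (1 + v / 2) * fterm v z₂ k :=
          Summable.tsum_le_tsum (fun k => tail_le hv hz₁ h12 k)
            ((_root_.summable_nat_add_iff (f := fun j => gterm v (z₂ / 2) j - gterm v (z₁ / 2) j) 1).2 (S₂.sub S₁))
            ((summable_fterm hv hz₂).mul_left _)
      _ = (z₂ - z₁) * (1 + v / 2) * ∑' k, fterm v z₂ k := tsum_mul_left
      _ = (z₂ - z₁) * (1 + v / 2) * besselI v z₂ := by rw [besselI_eq_tsum_fterm]
  have main1 : |deriv (fun z => besselI v z) z₂ - deriv (fun z => besselI v z) z₁| ≤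
      v / ((2:ℝ) ^ v * Real.Gamma (v + 1)) * (z₂ ^ (v - 1) - z₁ ^ (v - 1)) +
        (z₂ - z₁) * (1 + v / 2) * besselI v z₂ := by
    rw [habs, hsplit]
    simpa only [h0] using add_le_add_right htail (gterm v (z₂ / 2) 0 - gterm v (z₁ / 2) 0)
  refine ⟨main1, fun hv2 => ?_⟩
  have hG : 0 < Real.Gamma (v + 1) := Real.Gamma_pos_of_pos (by linarith)
  have h2v : (0:ℝ) < (2:ℝ) ^ v := Real.rpow_pos_of_pos two_pos v
  have hcoef : 0 ≤ v / ((2:ℝ) ^ v * Real.Gamma (v + 1)) := by positivity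
  have hle2 : z₂ ^ (v - 1) - z₁ ^ (v - 1) ≤ (z₂ - z₁) ^ (v - 1) :=
    rpow_sub_le hz₁ h12 (by linarith) (by linarith)
  refine main1.trans ?_
  have := mul_le_mul_of_nonneg_left hle2 hcoef
  linarith
end
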